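/- Let λ_{j,n} for j = 1,…,n satisfy δ₁ n/j^m ≤ λ_{j,n} ≤ δ₂ n/j^m for constants 0 < δ₁ ≤ δ₂ and m ≥ 1. Then D₂(c) := Σ_{j=1}^n (cλ_{j,n})²/(1+cλ_{j,n})² satisfies D₂(c) ≍ (cn)^{1/m} uniformly for c ∈ [log n / n, n^{m-1}] as n → ∞; i.e. there are constants 0 < k ≤ K independent of n and c such that k (cn)^{1/m} ≤ D₂(c) ≤ K (cn)^{1/m} for all such c and sufficiently large n. -/

import Mathlib

open Finset

lemma ratio_sq_mono {a x : ℝ} (ha : 0 ≤ a) (h : a ≤ x) :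
    a ^ 2 / (1 + a) ^ 2 ≤ x ^ 2 / (1 + x) ^ 2 := by
  rw [← div_pow, ← div_pow]
  apply pow_le_pow_left₀ (by positivity)
  rw [div_le_div_iff₀ (by linarith) (by linarith)]
  nlinarith

lemma term_le_one {x : ℝ} (hx : 0 ≤ x) : x ^ 2 / (1 + x) ^ 2 ≤ 1 := by
  rw [div_le_one (by positivity)]
  nlinarith

lemma term_le_sq {x : ℝ} (hx : 0 ≤ x) : x ^ 2 / (1 + x) ^ 2 ≤ x ^ 2 := by
  apply div_le_self (by positivity)
  nlinarith

lemma tailA {x s : ℝ} (hx : 1 ≤ x) (hs : 1 ≤ s) :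
    s * (x + 1) ^ (-(s + 1)) ≤ x ^ (-s) - (x + 1) ^ (-s) := by
  have hx0 : (0:ℝ) < x := by linarith
  have hA : (0:ℝ) < x ^ s := Real.rpow_pos_of_pos hx0 s
  have hB : (0:ℝ) < (x + 1) ^ s := Real.rpow_pos_of_pos (by linarith) s
  have hBern : x ^ s * (1 + s * (1 / x)) ≤ (x + 1) ^ s := by
    have h1 : 1 + s * (1 / x) ≤ (1 + 1 / x) ^ s :=
      one_add_mul_self_le_rpow_one_add (le_trans (by norm_num) (one_div_pos.mpr hx0).le) hs
    calc x ^ s * (1 + s * (1 / x)) ≤ x ^ s * (1 + 1 / x) ^ s :=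
          mul_le_mul_of_nonneg_left h1 hA.le
      _ = (x * (1 + 1 / x)) ^ s := (Real.mul_rpow hx0.le (by positivity)).symm
      _ = (x + 1) ^ s := by
          congr 1
          field_simp
  have hxinv : x * (1 / x) = 1 := by field_simp
  have h1 : s * x ^ s ≤ x * ((x + 1) ^ s - x ^ s) := by
    have h2 := mul_le_mul_of_nonneg_left hBern hx0.le
    have h3 : x * (x ^ s * (1 + s * (1 / x))) = x * x ^ s + s * x ^ s := by
      field_simp
    rw [h3] at h2
    nlinarith [h2]
  have hC : (x + 1) ^ (s + 1) = (x + 1) * (x + 1) ^ s := by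
    rw [Real.rpow_add (by linarith), Real.rpow_one]; ring
  rw [Real.rpow_neg (by linarith), Real.rpow_neg hx0.le, Real.rpow_neg (by linarith), hC]
  rw [inv_eq_one_div, inv_eq_one_div, inv_eq_one_div,
    div_sub_div _ _ hA.ne' hB.ne', mul_one_div,
    div_le_div_iff₀ (by positivity) (by positivity)]
  have hBA : (0:ℝ) < (x + 1) ^ s - x ^ s := by nlinarith [hA, hs, hx0]
  nlinarith [mul_le_mul_of_nonneg_right h1 hB.le, hB, hA, mul_pos hBA hB]

lemma telescope {J : ℕ} (F g : ℕ → ℝ) :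
    ∀ n, J ≤ n → (∀ j, J < j → j ≤ n → g j ≤ F (j - 1) - F j) →
    ∑ j ∈ Finset.Icc (J + 1) n, g j ≤ F J - F n := by
  intro n
  induction n with
  | zero =>
    intro h _
    interval_cases J
    simp
  | succ n ih =>
    intro hJ h
    rcases Nat.lt_or_ge J (n + 1) with hlt | hge
    · have hJn : J ≤ n := Nat.lt_succ_iff.mp hlt
      rw [Finset.sum_Icc_succ_top (by omega)]
      have h1 := ih hJn (fun j hj hjn => h j hj (by omega))
      have h2 := h (n + 1) (by omega) le_rfl
      simp only [Nat.add_sub_cancel] at h2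
      linarith
    · have : J = n + 1 := le_antisymm hJ hge
      subst this
      rw [Finset.Icc_eq_empty (by omega), Finset.sum_empty]
      simp

/-- If the eigenvalues satisfy `δ₁ n/j^m ≤ λ_{j,n} ≤ δ₂ n/j^m`, then the
risk-based variance function `D₂(c) = Σ_j (cλ_{j,n})²/(1+cλ_{j,n})²` is of exact
order `(cn)^{1/m}`, uniformly in `c ∈ [log n / n, n^{m-1}]`, for large `n`. -/
theorem variance_function_order_risk
    (m : ℝ) (hm : 1 ≤ m) (δ₁ δ₂ : ℝ) (hδ₁ : 0 < δ₁) (hδ : δ₁ ≤ δ₂)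
    (lam : ℕ → ℕ → ℝ)
    (hlam : ∀ n j : ℕ, 1 ≤ j → j ≤ n →
      δ₁ * n / (j : ℝ) ^ m ≤ lam n j ∧ lam n j ≤ δ₂ * n / (j : ℝ) ^ m) :
    ∃ k K : ℝ, 0 < k ∧ k ≤ K ∧ ∃ N : ℕ, ∀ n : ℕ, N ≤ n → ∀ c : ℝ,
      Real.log n / n ≤ c → c ≤ (n : ℝ) ^ (m - 1) →
      k * (c * n) ^ (1 / m) ≤
        (∑ j ∈ Finset.Icc 1 n, (c * lam n j) ^ 2 / (1 + c * lam n j) ^ 2) ∧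
      (∑ j ∈ Finset.Icc 1 n, (c * lam n j) ^ 2 / (1 + c * lam n j) ^ 2) ≤
        K * (c * n) ^ (1 / m) := by
  have hm0 : (0:ℝ) < m := by linarith
  have hs1 : (1:ℝ) ≤ 2 * m - 1 := by linarith
  have hs0 : (0:ℝ) < 2 * m - 1 := by linarith
  set k0 : ℝ := (δ₁ / (1 + δ₁)) ^ 2 with hk0def
  have hk0pos : 0 < k0 := by positivity
  have hk0lt : k0 < 1 := by
    have h1 : δ₁ / (1 + δ₁) < 1 := by
      rw [div_lt_one (by linarith)]; linarith
    have h2 : 0 ≤ δ₁ / (1 + δ₁) := by positivity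
    nlinarith
  refine ⟨k0 / 2, 1 + δ₂ ^ 2 * (2:ℝ) ^ (2 * m - 1) / (2 * m - 1), by positivity, ?_,
    max 3 ⌈Real.exp ((2:ℝ) ^ m)⌉₊, ?_⟩
  · have : (0:ℝ) ≤ δ₂ ^ 2 * (2:ℝ) ^ (2 * m - 1) / (2 * m - 1) := by positivity
    linarith
  intro n hn c hc1 hc2
  have hn3 : 3 ≤ n := le_trans (le_max_left _ _) hn
  have hn0 : (0:ℝ) < n := by exact_mod_cast (by omega : 0 < n)
  have h2m : (0:ℝ) < (2:ℝ) ^ m := Real.rpow_pos_of_pos two_pos m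
  have hlogn : (2:ℝ) ^ m ≤ Real.log n := by
    have h1 : Real.exp ((2:ℝ) ^ m) ≤ n := by
      calc Real.exp ((2:ℝ) ^ m) ≤ (⌈Real.exp ((2:ℝ) ^ m)⌉₊ : ℝ) := Nat.le_ceil _
        _ ≤ n := by exact_mod_cast le_trans (le_max_right _ _) hn
    exact (Real.le_log_iff_exp_le hn0).mpr h1
  have hc0 : 0 < c := lt_of_lt_of_le (div_pos (lt_of_lt_of_le h2m hlogn) hn0) hc1
  have hcn : (2:ℝ) ^ m ≤ c * n := le_trans hlogn ((div_le_iff₀ hn0).mp hc1)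
  have hcn0 : (0:ℝ) < c * n := lt_of_lt_of_le h2m hcn
  set T : ℝ := (c * (n:ℝ)) ^ (1 / m) with hTdef
  have hT0 : 0 < T := Real.rpow_pos_of_pos hcn0 _
  have hTm : T ^ m = c * n := by
    rw [hTdef, ← Real.rpow_mul hcn0.le, one_div_mul_cancel hm0.ne', Real.rpow_one]
  have hT2 : (2:ℝ) ≤ T := by
    have h1 : ((2:ℝ) ^ m) ^ (1 / m) ≤ T :=
      Real.rpow_le_rpow h2m.le hcn (by positivity)
    rwa [← Real.rpow_mul (by norm_num), mul_one_div_cancel hm0.ne', Real.rpow_one] at h1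
  have hTn : T ≤ (n:ℝ) := by
    have hcnm : c * n ≤ (n:ℝ) ^ m := by
      calc c * n ≤ (n:ℝ) ^ (m - 1) * (n:ℝ) ^ (1:ℝ) := by
            rw [Real.rpow_one]; exact mul_le_mul_of_nonneg_right hc2 hn0.le
        _ = (n:ℝ) ^ m := by rw [← Real.rpow_add hn0]; ring_nf
    have h1 : T ≤ ((n:ℝ) ^ m) ^ (1 / m) :=
      Real.rpow_le_rpow hcn0.le hcnm (by positivity)
    rwa [← Real.rpow_mul hn0.le, mul_one_div_cancel hm0.ne', Real.rpow_one] at h1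
  set J : ℕ := ⌊T⌋₊ with hJdef
  have hJT : (J:ℝ) ≤ T := Nat.floor_le hT0.le
  have hTJ : T < J + 1 := Nat.lt_floor_add_one T
  have hJ1 : 1 ≤ J := Nat.le_floor (by exact_mod_cast le_trans (by norm_num) hT2)
  have hJn : J ≤ n := by exact_mod_cast Nat.cast_le.mp (hJT.trans hTn)
  have hTJ2 : T / 2 ≤ (J:ℝ) := by linarith
  have hJpos : (0:ℝ) < J := by exact_mod_cast Nat.pos_of_ne_zero (by omega)
  -- nonnegativity / bounds of c * lam n j
  have hxlb : ∀ j : ℕ, 1 ≤ j → j ≤ n → c * (δ₁ * n / (j:ℝ) ^ m) ≤ c * lam n j := by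
    intro j hj hjn
    exact mul_le_mul_of_nonneg_left (hlam n j hj hjn).1 hc0.le
  have hxpos : ∀ j : ℕ, 1 ≤ j → j ≤ n → 0 ≤ c * lam n j := by
    intro j hj hjn
    refine le_trans ?_ (hxlb j hj hjn)
    have : (0:ℝ) < (j:ℝ) ^ m := Real.rpow_pos_of_pos (by exact_mod_cast hj) m
    positivity
  have htermnn : ∀ j ∈ Finset.Icc 1 n,
      (0:ℝ) ≤ (c * lam n j) ^ 2 / (1 + c * lam n j) ^ 2 := by
    intro j hj
    positivity
  -- lower bound
  have hlow : ∀ j ∈ Finset.Icc 1 J, k0 ≤ (c * lam n j) ^ 2 / (1 + c * lam n j) ^ 2 := by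
    intro j hj
    simp only [Finset.mem_Icc] at hj
    have hjn : j ≤ n := le_trans hj.2 hJn
    have hj1R : (1:ℝ) ≤ (j:ℝ) := by exact_mod_cast hj.1
    have hjm : ((j:ℝ)) ^ m ≤ c * n := by
      have hjT : (j:ℝ) ≤ T := le_trans (by exact_mod_cast hj.2) hJT
      calc ((j:ℝ)) ^ m ≤ T ^ m := Real.rpow_le_rpow (by positivity) hjT hm0.le
        _ = c * n := hTm
    have hjmpos : (0:ℝ) < (j:ℝ) ^ m := Real.rpow_pos_of_pos (by linarith) m
    have hge1 : (1:ℝ) ≤ c * n / (j:ℝ) ^ m := (one_le_div hjmpos).mpr hjm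
    have hx : δ₁ ≤ c * lam n j := by
      refine le_trans ?_ (hxlb j hj.1 hjn)
      calc δ₁ = δ₁ * 1 := (mul_one _).symm
        _ ≤ δ₁ * (c * n / (j:ℝ) ^ m) := mul_le_mul_of_nonneg_left hge1 hδ₁.le
        _ = c * (δ₁ * n / (j:ℝ) ^ m) := by ring
    have := ratio_sq_mono hδ₁.le hx
    rw [hk0def, div_pow]
    exact this
  have hlowsum : k0 / 2 * T ≤
      ∑ j ∈ Finset.Icc 1 n, (c * lam n j) ^ 2 / (1 + c * lam n j) ^ 2 := by
    have h1 : (J:ℝ) * k0 ≤ ∑ j ∈ Finset.Icc 1 J,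
        (c * lam n j) ^ 2 / (1 + c * lam n j) ^ 2 := by
      calc (J:ℝ) * k0 = ∑ _j ∈ Finset.Icc 1 J, k0 := by
            rw [Finset.sum_const, Nat.card_Icc]
            simp [nsmul_eq_mul]
        _ ≤ _ := Finset.sum_le_sum hlow
    have h2 : ∑ j ∈ Finset.Icc 1 J, (c * lam n j) ^ 2 / (1 + c * lam n j) ^ 2 ≤
        ∑ j ∈ Finset.Icc 1 n, (c * lam n j) ^ 2 / (1 + c * lam n j) ^ 2 :=
      Finset.sum_le_sum_of_subset_of_nonneg
        (Finset.Icc_subset_Icc_right hJn) (fun j hj _ => htermnn j hj)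
    nlinarith [hTJ2, hk0pos.le]
  refine ⟨hlowsum, ?_⟩
  -- upper bound
  have hsplit : ∑ j ∈ Finset.Icc 1 n, (c * lam n j) ^ 2 / (1 + c * lam n j) ^ 2 =
      (∑ j ∈ Finset.Icc 1 J, (c * lam n j) ^ 2 / (1 + c * lam n j) ^ 2) +
      ∑ j ∈ Finset.Icc (J + 1) n, (c * lam n j) ^ 2 / (1 + c * lam n j) ^ 2 := by
    rw [show (1:ℕ) = 0 + 1 from rfl, Finset.Icc_add_one_left_eq_Ioc, Finset.Icc_add_one_left_eq_Ioc,
      zero_add, Finset.Icc_add_one_left_eq_Ioc]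
    exact (Finset.sum_Ioc_consecutive _ (Nat.zero_le J) hJn).symm
  have hup1 : ∑ j ∈ Finset.Icc 1 J, (c * lam n j) ^ 2 / (1 + c * lam n j) ^ 2 ≤ T := by
    calc ∑ j ∈ Finset.Icc 1 J, (c * lam n j) ^ 2 / (1 + c * lam n j) ^ 2
        ≤ ∑ _j ∈ Finset.Icc 1 J, (1:ℝ) := by
          refine Finset.sum_le_sum fun j hj => ?_
          simp only [Finset.mem_Icc] at hj
          exact term_le_one (hxpos j hj.1 (le_trans hj.2 hJn))
      _ = (J:ℝ) := by rw [Finset.sum_const, Nat.card_Icc]; simp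
      _ ≤ T := hJT
  -- tail sum of rpow
  have htail : ∑ j ∈ Finset.Icc (J + 1) n, ((j:ℝ)) ^ (-(2 * m)) ≤
      (J:ℝ) ^ (-(2 * m - 1)) / (2 * m - 1) := by
    have hstep : ∀ j, J < j → j ≤ n →
        ((j:ℝ)) ^ (-(2 * m)) ≤
          (((j - 1 : ℕ):ℝ)) ^ (-(2 * m - 1)) / (2 * m - 1) -
          ((j:ℝ)) ^ (-(2 * m - 1)) / (2 * m - 1) := by
      intro j hj hjn
      have hj2 : 2 ≤ j := by omega
      have hcast : (((j - 1 : ℕ)):ℝ) = (j:ℝ) - 1 := by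
        push_cast [Nat.cast_sub (by omega : 1 ≤ j)]; ring
      have hx1 : (1:ℝ) ≤ (j:ℝ) - 1 := by
        have : (2:ℝ) ≤ (j:ℝ) := by exact_mod_cast hj2
        linarith
      have hta := tailA hx1 hs1
      have hxj : ((j:ℝ) - 1) + 1 = (j:ℝ) := by ring
      have hsum1 : (2 * m - 1) + 1 = 2 * m := by ring
      rw [hxj, hsum1] at hta
      rw [hcast, div_sub_div_same, le_div_iff₀ hs0]
      linarith [hta]
    have h1 := telescope (fun j => ((j:ℝ)) ^ (-(2 * m - 1)) / (2 * m - 1))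
      (fun j => ((j:ℝ)) ^ (-(2 * m))) n hJn hstep
    have hFn : (0:ℝ) ≤ ((n:ℝ)) ^ (-(2 * m - 1)) / (2 * m - 1) := by positivity
    linarith
  have hup2 : ∑ j ∈ Finset.Icc (J + 1) n, (c * lam n j) ^ 2 / (1 + c * lam n j) ^ 2 ≤
      δ₂ ^ 2 * (c * n) ^ 2 * ((J:ℝ) ^ (-(2 * m - 1)) / (2 * m - 1)) := by
    have hterm : ∀ j ∈ Finset.Icc (J + 1) n,
        (c * lam n j) ^ 2 / (1 + c * lam n j) ^ 2 ≤
          δ₂ ^ 2 * (c * n) ^ 2 * ((j:ℝ)) ^ (-(2 * m)) := by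
      intro j hj
      simp only [Finset.mem_Icc] at hj
      have hj1 : 1 ≤ j := by omega
      have hj1R : (1:ℝ) ≤ (j:ℝ) := by exact_mod_cast hj1
      have hjmpos : (0:ℝ) < (j:ℝ) ^ m := Real.rpow_pos_of_pos (by linarith) m
      have hxub : c * lam n j ≤ c * (δ₂ * n / (j:ℝ) ^ m) :=
        mul_le_mul_of_nonneg_left (hlam n j hj1 hj.2).2 hc0.le
      have h0 : 0 ≤ c * lam n j := hxpos j hj1 hj.2
      calc (c * lam n j) ^ 2 / (1 + c * lam n j) ^ 2 ≤ (c * lam n j) ^ 2 :=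
            term_le_sq h0
        _ ≤ (c * (δ₂ * n / (j:ℝ) ^ m)) ^ 2 := by
            apply pow_le_pow_left₀ h0 hxub
        _ = δ₂ ^ 2 * (c * n) ^ 2 * ((j:ℝ)) ^ (-(2 * m)) := by
            rw [Real.rpow_neg (by linarith), show (2:ℝ) * m = m + m by ring,
              Real.rpow_add (by linarith)]
            field_simp
    calc ∑ j ∈ Finset.Icc (J + 1) n, (c * lam n j) ^ 2 / (1 + c * lam n j) ^ 2
        ≤ ∑ j ∈ Finset.Icc (J + 1) n, δ₂ ^ 2 * (c * n) ^ 2 * ((j:ℝ)) ^ (-(2 * m)) :=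
          Finset.sum_le_sum hterm
      _ = δ₂ ^ 2 * (c * n) ^ 2 * ∑ j ∈ Finset.Icc (J + 1) n, ((j:ℝ)) ^ (-(2 * m)) := by
          rw [Finset.mul_sum]
      _ ≤ δ₂ ^ 2 * (c * n) ^ 2 * ((J:ℝ) ^ (-(2 * m - 1)) / (2 * m - 1)) := by
          apply mul_le_mul_of_nonneg_left htail (by positivity)
  -- simplify the right factor
  have hkey : δ₂ ^ 2 * (c * n) ^ 2 * ((J:ℝ) ^ (-(2 * m - 1)) / (2 * m - 1)) ≤
      δ₂ ^ 2 * (2:ℝ) ^ (2 * m - 1) / (2 * m - 1) * T := by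
    have hJrp : (J:ℝ) ^ (-(2 * m - 1)) ≤ (T / 2) ^ (-(2 * m - 1)) :=
      Real.rpow_le_rpow_of_nonpos (by linarith) hTJ2 (by linarith)
    have hcn2 : (c * n) ^ 2 = T ^ (2 * m) := by
      rw [show (2:ℝ) * m = m + m by ring, Real.rpow_add hT0, hTm]
      ring
    have hTd : (T / 2) ^ (-(2 * m - 1)) = T ^ (-(2 * m - 1)) * (2:ℝ) ^ (2 * m - 1) := by
      rw [Real.div_rpow hT0.le (by norm_num), Real.rpow_neg hT0.le,
        Real.rpow_neg (by norm_num : (0:ℝ) ≤ 2)]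
      rw [div_eq_mul_inv, inv_inv]
    have hTT : T ^ (2 * m) * T ^ (-(2 * m - 1)) = T := by
      rw [← Real.rpow_add hT0, show 2 * m + -(2 * m - 1) = (1:ℝ) by ring, Real.rpow_one]
    calc δ₂ ^ 2 * (c * n) ^ 2 * ((J:ℝ) ^ (-(2 * m - 1)) / (2 * m - 1))
        ≤ δ₂ ^ 2 * (c * n) ^ 2 * ((T / 2) ^ (-(2 * m - 1)) / (2 * m - 1)) := by
          gcongr
      _ = δ₂ ^ 2 * (2:ℝ) ^ (2 * m - 1) / (2 * m - 1) * T := by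
          rw [hcn2, hTd,
            show δ₂ ^ 2 * T ^ (2 * m) * (T ^ (-(2 * m - 1)) * (2:ℝ) ^ (2 * m - 1) / (2 * m - 1)) =
              δ₂ ^ 2 * (2:ℝ) ^ (2 * m - 1) / (2 * m - 1) * (T ^ (2 * m) * T ^ (-(2 * m - 1))) from by
              ring, hTT]
  calc ∑ j ∈ Finset.Icc 1 n, (c * lam n j) ^ 2 / (1 + c * lam n j) ^ 2
      ≤ T + δ₂ ^ 2 * (2:ℝ) ^ (2 * m - 1) / (2 * m - 1) * T := by
        rw [hsplit]; exact add_le_add hup1 (le_trans hup2 hkey)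
    _ = (1 + δ₂ ^ 2 * (2:ℝ) ^ (2 * m - 1) / (2 * m - 1)) * T := by ring
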